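/- Let P ⊆ ℝ² be a lattice polygon and let u ∈ ℤ² be primitive. Suppose there exist two distinct u-lattice lines L₁ ≠ L₂ such that for i = 1, 2, vol(Lᵢ ∩ P) ≥ vol(L' ∩ P) for every u-lattice line L', where vol denotes Euclidean length of the chord. Then there exists a nonzero vector a ∈ ℝ² such that both faces F⁺ = {x ∈ P : ⟨a, x⟩ = max_{P} ⟨a, ·⟩} and F⁻ = {x ∈ P : ⟨a, x⟩ = min_{P} ⟨a, ·⟩} have affine dimension 1 (a pair of parallel edges e₁, e₂ of P), and every u-lattice line L with vol(L ∩ P) ≥ vol(L' ∩ P) for all u-lattice lines L' satisfies L ∩ P ⊆ conv(F⁺ ∪ F⁻). -/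

import Mathlib

set_option maxHeartbeats 1000000


/-- The coordinatewise embedding of `ℤ²` into the Euclidean plane. -/
def toE (z : Fin 2 → ℤ) : EuclideanSpace ℝ (Fin 2) := WithLp.toLp 2 (fun i => (z i : ℝ))

/-- The `u`-lattice line through the lattice point `z` in direction `u`. -/
def uline (z u : Fin 2 → ℤ) : Set (EuclideanSpace ℝ (Fin 2)) :=
  {p | ∃ t : ℝ, p = toE z + t • toE u}

lemma exists_dist_eq_diam {s : Set (EuclideanSpace ℝ (Fin 2))} (hs : IsCompact s)
    (hne : s.Nonempty) : ∃ p ∈ s, ∃ q ∈ s, dist p q = Metric.diam s := by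
  have hc : ContinuousOn (fun pq : EuclideanSpace ℝ (Fin 2) × EuclideanSpace ℝ (Fin 2) =>
      dist pq.1 pq.2) (s ×ˢ s) := continuous_dist.continuousOn
  obtain ⟨⟨p, q⟩, hpq, hmax⟩ := (hs.prod hs).exists_isMaxOn (hne.prod hne) hc
  have h1 : dist p q ≤ Metric.diam s := Metric.dist_le_diam_of_mem hs.isBounded hpq.1 hpq.2
  have h2 : Metric.diam s ≤ dist p q := by
    refine Metric.diam_le_of_forall_dist_le dist_nonneg fun x hx y hy => ?_
    have := hmax (Set.mk_mem_prod hx hy)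
    simpa using this
  exact ⟨p, hpq.1, q, hpq.2, le_antisymm h1 h2⟩

lemma inner2 (x y : EuclideanSpace ℝ (Fin 2)) :
    (inner ℝ x y : ℝ) = x 0 * y 0 + x 1 * y 1 := by
  simp [PiLp.inner_apply, Fin.sum_univ_two, RCLike.inner_apply, mul_comm]


def rot (d : EuclideanSpace ℝ (Fin 2)) : EuclideanSpace ℝ (Fin 2) := WithLp.toLp 2 ![d 1, -(d 0)]

lemma rot_apply0 (d : EuclideanSpace ℝ (Fin 2)) : rot d 0 = d 1 := rfl
lemma rot_apply1 (d : EuclideanSpace ℝ (Fin 2)) : rot d 1 = -(d 0) := rfl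

lemma inner_rot (d y : EuclideanSpace ℝ (Fin 2)) :
    (inner ℝ (rot d) y : ℝ) = d 1 * y 0 - d 0 * y 1 := by
  rw [inner2, rot_apply0, rot_apply1]; ring

lemma ker_rot {d v : EuclideanSpace ℝ (Fin 2)} (hd : d ≠ 0)
    (h : d 1 * v 0 - d 0 * v 1 = 0) : ∃ t : ℝ, v = t • d := by
  have hd' : d 0 ≠ 0 ∨ d 1 ≠ 0 := by
    by_contra hc
    push_neg at hc
    apply hd
    ext i
    fin_cases i
    · exact hc.1
    · exact hc.2
  rcases hd' with h0 | h1
  · refine ⟨v 0 / d 0, ?_⟩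
    ext i
    fin_cases i
    · simp [PiLp.smul_apply]; field_simp
    · simp [PiLp.smul_apply]; field_simp; nlinarith [h]
  · refine ⟨v 1 / d 1, ?_⟩
    ext i
    fin_cases i
    · simp [PiLp.smul_apply]; field_simp; nlinarith [h]
    · simp [PiLp.smul_apply]; field_simp

def fphi (u : Fin 2 → ℤ) : EuclideanSpace ℝ (Fin 2) →ₗ[ℝ] ℝ where
  toFun x := (u 0 : ℝ) * x 1 - (u 1 : ℝ) * x 0
  map_add' x y := by simp [PiLp.add_apply]; ring
  map_smul' r x := by simp [PiLp.smul_apply]; ring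

lemma fphi_apply (u : Fin 2 → ℤ) (x : EuclideanSpace ℝ (Fin 2)) :
    fphi u x = (u 0 : ℝ) * x 1 - (u 1 : ℝ) * x 0 := rfl

lemma toE_apply (z : Fin 2 → ℤ) (i : Fin 2) : toE z i = (z i : ℝ) := rfl

lemma fphi_toE (u z : Fin 2 → ℤ) :
    fphi u (toE z) = ((u 0 * z 1 - u 1 * z 0 : ℤ) : ℝ) := by
  simp [fphi_apply, toE_apply]

lemma toE_ne_zero {u : Fin 2 → ℤ} (hu : u ≠ 0) : toE u ≠ 0 := by
  intro h
  apply hu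
  funext i
  have : toE u i = 0 := by rw [h]; rfl
  rw [toE_apply] at this
  simpa using this

lemma fphi_toE_u (u : Fin 2 → ℤ) : fphi u (toE u) = 0 := by
  simp [fphi_apply, toE_apply]; ring

lemma ker_fphi {u : Fin 2 → ℤ} (hu : u ≠ 0) {v : EuclideanSpace ℝ (Fin 2)}
    (h : fphi u v = 0) : ∃ t : ℝ, v = t • toE u := by
  have hd' : (u 0 : ℝ) ≠ 0 ∨ (u 1 : ℝ) ≠ 0 := by
    by_contra hc
    push_neg at hc
    apply hu; funext i; fin_cases i
    · exact_mod_cast hc.1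
    · exact_mod_cast hc.2
  rw [fphi_apply] at h
  rcases hd' with h0 | h1
  · refine ⟨v 0 / (u 0 : ℝ), ?_⟩
    ext i
    fin_cases i
    · show v 0 = (v 0 / (u 0 : ℝ)) • toE u 0
      rw [smul_eq_mul, toE_apply]; field_simp
    · show v 1 = (v 0 / (u 0 : ℝ)) • toE u 1
      rw [smul_eq_mul, toE_apply]; field_simp; nlinarith [h]
  · refine ⟨v 1 / (u 1 : ℝ), ?_⟩
    ext i
    fin_cases i
    · show v 0 = (v 1 / (u 1 : ℝ)) • toE u 0
      rw [smul_eq_mul, toE_apply]; field_simp; nlinarith [h]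
    · show v 1 = (v 1 / (u 1 : ℝ)) • toE u 1
      rw [smul_eq_mul, toE_apply]; field_simp

lemma uline_eq {u : Fin 2 → ℤ} (hu : u ≠ 0) (z : Fin 2 → ℤ) :
    uline z u = {x | fphi u x = fphi u (toE z)} := by
  ext x
  constructor
  · rintro ⟨t, rfl⟩
    simp [Set.mem_setOf_eq, map_add, map_smul, fphi_toE_u]
  · intro hx
    have : fphi u (x - toE z) = 0 := by
      rw [map_sub, hx, sub_self]
    obtain ⟨t, ht⟩ := ker_fphi hu this
    exact ⟨t, by rw [← ht]; abel⟩

lemma gcd_ne_zero {u : Fin 2 → ℤ} (hu : Finset.univ.gcd u = 1) : u ≠ 0 := by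
  intro h
  have h0 : Finset.univ.gcd u = 0 := Finset.gcd_eq_zero_iff.mpr fun i _ => by rw [h]; rfl
  rw [hu] at h0
  exact one_ne_zero h0

lemma exists_height {u : Fin 2 → ℤ} (hu : Finset.univ.gcd u = 1) (n : ℤ) :
    ∃ z : Fin 2 → ℤ, u 0 * z 1 - u 1 * z 0 = n := by
  have hcop : IsCoprime (u 0) (u 1) := by
    have hdvd : (Int.gcd (u 0) (u 1) : ℤ) ∣ Finset.univ.gcd u := by
      refine Finset.dvd_gcd fun i _ => ?_
      fin_cases i
      · exact Int.gcd_dvd_left _ _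
      · exact Int.gcd_dvd_right _ _
    rw [hu] at hdvd
    rw [Int.isCoprime_iff_gcd_eq_one]
    have := Int.eq_one_of_dvd_one (by positivity) hdvd
    exact_mod_cast this
  obtain ⟨c, d, hcd⟩ := hcop
  refine ⟨![-(n * d), n * c], ?_⟩
  show u 0 * (n * c) - u 1 * (-(n * d)) = n
  linear_combination n * hcd

section Chord

variable {u : Fin 2 → ℤ} {P : Set (EuclideanSpace ℝ (Fin 2))}

lemma uline_convex (hu : u ≠ 0) (z : Fin 2 → ℤ) : Convex ℝ (uline z u) := by
  rw [uline_eq hu]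
  intro x hx y hy s t hs ht hst
  simp only [Set.mem_setOf_eq] at *
  rw [map_add, map_smul, map_smul, hx, hy, smul_eq_mul, smul_eq_mul, ← add_mul, hst, one_mul]

lemma uline_closed (hu : u ≠ 0) (z : Fin 2 → ℤ) : IsClosed (uline z u) := by
  rw [uline_eq hu]
  exact isClosed_eq (fphi u).continuous_of_finiteDimensional continuous_const

lemma chord_compact (hu : u ≠ 0) (hPc : IsCompact P) (z : Fin 2 → ℤ) :
    IsCompact (uline z u ∩ P) := hPc.inter_left (uline_closed hu z)

/-- A chord of positive diameter is a segment of length the diameter in direction `u`. -/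
lemma chord_seg (hu : u ≠ 0) (hPc : IsCompact P) (hPconv : Convex ℝ P) (z : Fin 2 → ℤ)
    {D : ℝ} (hD : 0 < D) (hdiam : Metric.diam (uline z u ∩ P) = D) :
    ∃ p, uline z u ∩ P = segment ℝ p (p + (D / ‖toE u‖) • toE u) := by
  set S := uline z u ∩ P with hS
  have hne : S.Nonempty := by
    rcases Set.eq_empty_or_nonempty S with h | h
    · rw [h, Metric.diam_empty] at hdiam; exact absurd hdiam.symm (ne_of_gt hD)
    · exact h
  obtain ⟨p, hp, q, hq, hpq⟩ := exists_dist_eq_diam (chord_compact hu hPc z) hne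
  rw [hdiam] at hpq
  -- q - p = s • toE u
  obtain ⟨t₁, ht₁⟩ := hp.1
  obtain ⟨t₂, ht₂⟩ := hq.1
  have hqp : q - p = (t₂ - t₁) • toE u := by rw [ht₁, ht₂, sub_smul]; abel
  have hnorm : ‖toE u‖ > 0 := norm_pos_iff.mpr (toE_ne_zero hu)
  -- wlog positive direction
  obtain ⟨p', q', hp', hq', s, hsv, hsD⟩ :
      ∃ p' q', p' ∈ S ∧ q' ∈ S ∧ ∃ s : ℝ, q' - p' = s • toE u ∧ s * ‖toE u‖ = D := by
    rcases le_or_gt t₁ t₂ with h | h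
    · exact ⟨p, q, hp, hq, t₂ - t₁, hqp, by
        have : dist p q = |t₂ - t₁| * ‖toE u‖ := by
          rw [dist_eq_norm, ← neg_sub q p, norm_neg, hqp, norm_smul, Real.norm_eq_abs]
        rw [hpq] at this
        rw [abs_of_nonneg (by linarith)] at this
        linarith⟩
    · refine ⟨q, p, hq, hp, t₁ - t₂, by rw [ht₁, ht₂, sub_smul]; abel, ?_⟩
      have : dist p q = |t₂ - t₁| * ‖toE u‖ := by
        rw [dist_eq_norm, ← neg_sub q p, norm_neg, hqp, norm_smul, Real.norm_eq_abs]
      rw [hpq] at this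
      rw [abs_of_nonpos (by linarith), neg_sub] at this
      linarith
  have hspos : 0 < s := by
    rcases lt_trichotomy s 0 with h | h | h
    · nlinarith
    · rw [h, zero_mul] at hsD; exact absurd hsD.symm (ne_of_gt hD)
    · exact h
  have hsval : s = D / ‖toE u‖ := by field_simp; linarith
  have hq'' : q' = p' + (D / ‖toE u‖) • toE u := by
    rw [← hsval, ← hsv]; abel
  refine ⟨p', ?_⟩
  rw [← hq'']
  apply le_antisymm
  · -- S ⊆ segment
    intro r hr
    obtain ⟨t₃, ht₃⟩ := hr.1
    obtain ⟨t₀, ht₀⟩ := hp'.1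
    have hrp : r - p' = (t₃ - t₀) • toE u := by rw [ht₃, ht₀, sub_smul]; abel
    set s' := t₃ - t₀ with hs'
    have hb := (chord_compact hu hPc z).isBounded
    have h1 : |s'| * ‖toE u‖ ≤ D := by
      have := Metric.dist_le_diam_of_mem hb hr hp'
      rw [hdiam] at this
      calc |s'| * ‖toE u‖ = ‖s' • toE u‖ := by rw [norm_smul, Real.norm_eq_abs]
        _ = dist r p' := by rw [dist_eq_norm, hrp]
        _ ≤ D := this
    have h2 : |s' - s| * ‖toE u‖ ≤ D := by
      have := Metric.dist_le_diam_of_mem hb hr hq'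
      rw [hdiam] at this
      calc |s' - s| * ‖toE u‖ = ‖(s' - s) • toE u‖ := by rw [norm_smul, Real.norm_eq_abs]
        _ = dist r q' := by
            rw [dist_eq_norm]
            congr 1
            rw [sub_smul, ← hsv, ← hrp]; abel
        _ ≤ D := this
    have hs'0 : 0 ≤ s' := by
      rcases le_or_gt 0 s' with h | h
      · exact h
      · exfalso
        rw [abs_of_nonpos (by linarith [abs_nonneg s']), neg_sub] at h2
        nlinarith [abs_nonneg s']
    have hs's : s' ≤ s := by
      rw [abs_of_nonneg hs'0] at h1
      nlinarith
    refine ⟨1 - s' / s, s' / s, by rw [sub_nonneg]; exact (div_le_one hspos).mpr hs's, div_nonneg hs'0 hspos.le, by ring, ?_⟩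
    have : (1 - s' / s) • p' + (s' / s) • q' = p' + (s' / s * s) • toE u := by
      rw [hq'', hsval]
      module
    rw [this, div_mul_cancel₀ _ (ne_of_gt hspos), ← hrp]
    abel
  · exact (Convex.inter (uline_convex hu z) hPconv).segment_subset hp' hq' 

end Chord

/-- Key support lemma: the line through the left endpoints of the two maximal
chords supports `P` at all points of integer height. -/
lemma lower_bound {P : Set (EuclideanSpace ℝ (Fin 2))} (hP : Convex ℝ P)
    (f : EuclideanSpace ℝ (Fin 2) →ₗ[ℝ] ℝ) (v0 : EuclideanSpace ℝ (Fin 2))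
    {D c : ℝ} (hD : 0 < D) (hv0 : v0 ≠ 0) (hfv : f v0 = 0)
    (hker : ∀ p q : EuclideanSpace ℝ (Fin 2), f p = f q → ∃ t : ℝ, p - q = t • v0)
    (a : EuclideanSpace ℝ (Fin 2)) (hav : 0 < (inner ℝ a v0 : ℝ))
    (n₁ n₂ : ℤ) (h12 : n₁ < n₂) (x₁ x₂ : EuclideanSpace ℝ (Fin 2))
    (hc1 : {x | x ∈ P ∧ f x = (n₁ : ℝ)} = segment ℝ x₁ (x₁ + (D / ‖v0‖) • v0))
    (hc2 : {x | x ∈ P ∧ f x = (n₂ : ℝ)} = segment ℝ x₂ (x₂ + (D / ‖v0‖) • v0))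
    (ha1 : (inner ℝ a x₁ : ℝ) = c) (ha2 : (inner ℝ a x₂ : ℝ) = c)
    (hmax : ∀ (m : ℤ) (p q : EuclideanSpace ℝ (Fin 2)), p ∈ P → q ∈ P →
      f p = (m : ℝ) → f q = (m : ℝ) → dist p q ≤ D)
    (y : EuclideanSpace ℝ (Fin 2)) (hy : y ∈ P) (m : ℤ) (hm : f y = (m : ℝ)) :
    c ≤ (inner ℝ a y : ℝ) := by
  set w : EuclideanSpace ℝ (Fin 2) := (D / ‖v0‖) • v0 with hw
  have hnorm : (0:ℝ) < ‖v0‖ := norm_pos_iff.mpr hv0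
  have hfw : f w = 0 := by rw [hw, map_smul, hfv, smul_zero]
  have haw : (0:ℝ) < inner ℝ a w := by
    rw [hw, real_inner_smul_right]
    positivity
  -- basic memberships from hc1, hc2
  have hx₁ : x₁ ∈ P ∧ f x₁ = (n₁ : ℝ) := by
    rw [← Set.mem_setOf_eq (p := fun x => x ∈ P ∧ f x = (n₁:ℝ)), hc1]
    exact left_mem_segment ℝ _ _
  have hx₁w : x₁ + w ∈ P ∧ f (x₁ + w) = (n₁ : ℝ) := by
    rw [← Set.mem_setOf_eq (p := fun x => x ∈ P ∧ f x = (n₁:ℝ)), hc1]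
    exact right_mem_segment ℝ _ _
  have hx₂ : x₂ ∈ P ∧ f x₂ = (n₂ : ℝ) := by
    rw [← Set.mem_setOf_eq (p := fun x => x ∈ P ∧ f x = (n₂:ℝ)), hc2]
    exact left_mem_segment ℝ _ _
  have hx₂w : x₂ + w ∈ P ∧ f (x₂ + w) = (n₂ : ℝ) := by
    rw [← Set.mem_setOf_eq (p := fun x => x ∈ P ∧ f x = (n₂:ℝ)), hc2]
    exact right_mem_segment ℝ _ _
  -- points of the chords have inner ≥ c
  have hseg1 : ∀ r ∈ segment ℝ x₁ (x₁ + w), c ≤ (inner ℝ a r : ℝ) := by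
    rintro r ⟨s1, s2, hs1, hs2, hsum, rfl⟩
    rw [inner_add_right, real_inner_smul_right, real_inner_smul_right, inner_add_right, ha1]
    have hcc : s1 * c + s2 * c = c := by rw [← add_mul, hsum, one_mul]
    nlinarith [mul_nonneg hs2 haw.le, hcc]
  have hseg2 : ∀ r ∈ segment ℝ x₂ (x₂ + w), c ≤ (inner ℝ a r : ℝ) := by
    rintro r ⟨s1, s2, hs1, hs2, hsum, rfl⟩
    rw [inner_add_right, real_inner_smul_right, real_inner_smul_right, inner_add_right, ha2]
    have hcc : s1 * c + s2 * c = c := by rw [← add_mul, hsum, one_mul]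
    nlinarith [mul_nonneg hs2 haw.le, hcc]
  by_contra hlt
  push_neg at hlt
  rcases lt_trichotomy m n₁ with hm1 | hm1 | hm1
  · -- m < n₁ : the segment [x₂, y] crosses height n₁ at a point with inner < c
    set μ : ℝ := ((n₂ : ℝ) - n₁) / ((n₂ : ℝ) - m) with hμ
    have hd1 : (0:ℝ) < (n₂:ℝ) - m := by
      have : m < n₂ := hm1.trans h12
      exact_mod_cast sub_pos.mpr (by exact_mod_cast this)
    have hμ0 : 0 < μ := by
      apply div_pos _ hd1
      exact_mod_cast sub_pos.mpr (by exact_mod_cast h12)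
    have hμ1 : μ ≤ 1 := by
      rw [div_le_one hd1]
      have : (m:ℝ) ≤ n₁ := by exact_mod_cast hm1.le
      linarith
    set p' := (1 - μ) • x₂ + μ • y with hp'
    have hp'P : p' ∈ P := hP hx₂.1 hy (by linarith) hμ0.le (by ring)
    have hp'f : f p' = (n₁ : ℝ) := by
      rw [hp', map_add, map_smul, map_smul, hx₂.2, hm, smul_eq_mul, smul_eq_mul, hμ]
      field_simp
      ring
    have hp'seg : p' ∈ segment ℝ x₁ (x₁ + w) := by
      rw [← hc1]; exact ⟨hp'P, hp'f⟩
    have := hseg1 p' hp'seg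
    rw [hp', inner_add_right, real_inner_smul_right, real_inner_smul_right, ha2] at this
    nlinarith
  · -- m = n₁ : y is on chord 1
    have : y ∈ segment ℝ x₁ (x₁ + w) := by
      rw [← hc1]; exact ⟨hy, by rw [hm, hm1]⟩
    exact absurd (hseg1 y this) (not_le.mpr hlt)
  rcases lt_trichotomy m n₂ with hm2 | hm2 | hm2
  · -- n₁ < m < n₂ : strictly between, contradiction with maximality
    set lam : ℝ := ((n₂ : ℝ) - m) / ((n₂ : ℝ) - n₁) with hlam
    have hd1 : (0:ℝ) < (n₂:ℝ) - n₁ := by exact_mod_cast sub_pos.mpr (by exact_mod_cast h12)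
    have hlam0 : 0 < lam := by
      apply div_pos _ hd1
      exact_mod_cast sub_pos.mpr (by exact_mod_cast hm2)
    have hlam1 : lam ≤ 1 := by
      rw [div_le_one hd1]
      have : (n₁:ℝ) ≤ m := by exact_mod_cast hm1.le
      linarith
    set q := lam • x₁ + (1 - lam) • x₂ with hq
    have hqP : q ∈ P := hP hx₁.1 hx₂.1 hlam0.le (by linarith) (by ring)
    have hqf : f q = (m : ℝ) := by
      rw [hq, map_add, map_smul, map_smul, hx₁.2, hx₂.2, smul_eq_mul, smul_eq_mul, hlam]
      field_simp
      ring
    have haq : (inner ℝ a q : ℝ) = c := by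
      rw [hq, inner_add_right, real_inner_smul_right, real_inner_smul_right, ha1, ha2]
      ring
    -- y - q = t • v0 with t < 0
    obtain ⟨t, ht⟩ := hker y q (by rw [hm, hqf])
    have htval : (inner ℝ a y : ℝ) - c = t * inner ℝ a v0 := by
      rw [← haq, ← inner_sub_right, ht, real_inner_smul_right]
    have htneg : t < 0 := by nlinarith
    have hqwP : q + w ∈ P := by
      have heq : q + w = lam • (x₁ + w) + (1 - lam) • (x₂ + w) := by
        rw [hq]; module
      rw [heq]
      exact hP hx₁w.1 hx₂w.1 hlam0.le (by linarith) (by ring)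
    have hqwf : f (q + w) = (m : ℝ) := by rw [map_add, hqf, hfw, add_zero]
    have hdle : dist y (q + w) ≤ D := hmax m y (q + w) hy hqwP hm hqwf
    have h1 : y - (q + w) = (t - D / ‖v0‖) • v0 := by
      rw [sub_smul, ← ht, hw]; abel
    have hnp : t - D / ‖v0‖ ≤ 0 := by nlinarith [div_pos hD hnorm]
    have h2 : dist y (q + w) = (D / ‖v0‖ - t) * ‖v0‖ := by
      rw [dist_eq_norm, h1, norm_smul, Real.norm_eq_abs, abs_of_nonpos hnp]
      ring
    rw [h2, sub_mul, div_mul_cancel₀ _ (ne_of_gt hnorm)] at hdle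
    nlinarith
  · -- m = n₂
    have : y ∈ segment ℝ x₂ (x₂ + w) := by
      rw [← hc2]; exact ⟨hy, by rw [hm, hm2]⟩
    exact absurd (hseg2 y this) (not_le.mpr hlt)
  · -- m > n₂ : segment [x₁, y] crosses height n₂
    set μ : ℝ := ((n₂ : ℝ) - n₁) / ((m : ℝ) - n₁) with hμ
    have hd1 : (0:ℝ) < (m:ℝ) - n₁ := by
      have : n₁ < m := h12.trans hm2
      exact_mod_cast sub_pos.mpr (by exact_mod_cast this)
    have hμ0 : 0 < μ := by
      apply div_pos _ hd1
      exact_mod_cast sub_pos.mpr (by exact_mod_cast h12)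
    have hμ1 : μ ≤ 1 := by
      rw [div_le_one hd1]
      have : (n₂:ℝ) ≤ m := by exact_mod_cast hm2.le
      linarith
    set p' := (1 - μ) • x₁ + μ • y with hp'
    have hp'P : p' ∈ P := hP hx₁.1 hy (by linarith) hμ0.le (by ring)
    have hp'f : f p' = (n₂ : ℝ) := by
      rw [hp', map_add, map_smul, map_smul, hx₁.2, hm, smul_eq_mul, smul_eq_mul, hμ]
      field_simp
      ring
    have hp'seg : p' ∈ segment ℝ x₂ (x₂ + w) := by
      rw [← hc2]; exact ⟨hp'P, hp'f⟩
    have := hseg2 p' hp'seg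
    rw [hp', inner_add_right, real_inner_smul_right, real_inner_smul_right, ha1] at this
    nlinarith

lemma noncol_swap {A B C : EuclideanSpace ℝ (Fin 2)}
    (h : ∀ t : ℝ, C ≠ A + t • (B - A)) : ∀ t : ℝ, C ≠ B + t • (A - B) := by
  intro t hc
  exact h (1 - t) (by rw [hc]; module)

lemma mid_helper {P : Set (EuclideanSpace ℝ (Fin 2))} (hP : Convex ℝ P)
    (f : EuclideanSpace ℝ (Fin 2) →ₗ[ℝ] ℝ) {A B C : EuclideanSpace ℝ (Fin 2)}
    (hA : A ∈ P) (hB : B ∈ P) (hC : C ∈ P) (h1 : f A < f C) (h2 : f C < f B)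
    (hnc : ∀ t : ℝ, C ≠ A + t • (B - A)) :
    ∃ p q, p ∈ P ∧ q ∈ P ∧ f p = f C ∧ f q = f C ∧ p ≠ q := by
  have hAB : f A < f B := h1.trans h2
  set θ : ℝ := (f C - f A) / (f B - f A) with hθ
  have hd : (0:ℝ) < f B - f A := sub_pos.mpr hAB
  have hθ0 : 0 ≤ θ := le_of_lt (div_pos (sub_pos.mpr h1) hd)
  have hθ1 : θ ≤ 1 := by rw [div_le_one hd]; linarith
  set q := A + θ • (B - A) with hq
  have hqc : q = (1 - θ) • A + θ • B := by rw [hq]; module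
  have hqP : q ∈ P := by rw [hqc]; exact hP hA hB (by linarith) hθ0 (by ring)
  have hqf : f q = f C := by
    rw [hq, map_add, map_smul, map_sub, smul_eq_mul, hθ]
    field_simp
    ring
  exact ⟨q, C, hqP, hC, hqf, rfl, fun h => hnc θ h.symm⟩

lemma two_points {V : Finset (Fin 2 → ℤ)} {P : Set (EuclideanSpace ℝ (Fin 2))}
    (hP : P = convexHull ℝ (toE '' (V : Set (Fin 2 → ℤ))))
    (hdim : affineSpan ℝ P = ⊤) (u : Fin 2 → ℤ) :
    ∃ (m : ℤ) (p q : EuclideanSpace ℝ (Fin 2)), p ∈ P ∧ q ∈ P ∧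
      fphi u p = (m : ℝ) ∧ fphi u q = (m : ℝ) ∧ p ≠ q := by
  classical
  set S : Set (EuclideanSpace ℝ (Fin 2)) := toE '' (V : Set (Fin 2 → ℤ)) with hS
  have hSP : S ⊆ P := by rw [hP]; exact subset_convexHull ℝ S
  have hspan : affineSpan ℝ S = ⊤ := by
    rw [← affineSpan_convexHull, ← hP, hdim]
  have hSne : S.Nonempty := AffineSubspace.nonempty_of_affineSpan_eq_top ℝ (EuclideanSpace ℝ (Fin 2)) (EuclideanSpace ℝ (Fin 2)) hspan
  obtain ⟨p₀, hp₀⟩ := hSne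
  have hvs : vectorSpan ℝ S = ⊤ := by
    rw [← direction_affineSpan, hspan, AffineSubspace.direction_top]
  have hspanW : Submodule.span ℝ ((fun x => x -ᵥ p₀) '' S) = ⊤ := by
    rw [← vectorSpan_eq_span_vsub_set_right ℝ hp₀, hvs]
  -- find w₁ ≠ 0 in W
  have hW1 : ∃ w₁ ∈ (fun x => x -ᵥ p₀) '' S, w₁ ≠ (0 : EuclideanSpace ℝ (Fin 2)) := by
    by_contra h
    push_neg at h
    have : Submodule.span ℝ ((fun x => x -ᵥ p₀) '' S) ≤ ⊥ := by
      rw [Submodule.span_le]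
      intro x hx
      simp [h x hx]
    rw [hspanW] at this
    have h2 : (⊥ : Submodule ℝ (EuclideanSpace ℝ (Fin 2))) = ⊤ := (le_bot_iff.mp this).symm
    exact bot_ne_top h2
  obtain ⟨w₁, hw₁S, hw₁0⟩ := hW1
  have hW2 : ∃ w₂ ∈ (fun x => x -ᵥ p₀) '' S, w₂ ∉ (Submodule.span ℝ {w₁} : Submodule ℝ _) := by
    by_contra h
    push_neg at h
    have : Submodule.span ℝ ((fun x => x -ᵥ p₀) '' S) ≤ Submodule.span ℝ {w₁} := by
      rw [Submodule.span_le]; exact h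
    rw [hspanW, top_le_iff] at this
    have h1 : Module.finrank ℝ (Submodule.span ℝ ({w₁} : Set (EuclideanSpace ℝ (Fin 2)))) = 1 :=
      finrank_span_singleton hw₁0
    rw [this, finrank_top, finrank_euclideanSpace] at h1
    simp at h1
  obtain ⟨w₂, hw₂S, hw₂⟩ := hW2
  obtain ⟨p₁, hp₁S, hp₁⟩ := hw₁S
  obtain ⟨p₂, hp₂S, hp₂⟩ := hw₂S
  have hw₁ : w₁ = p₁ - p₀ := hp₁.symm
  have hw₂e : w₂ = p₂ - p₀ := hp₂.symm
  -- integer heights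
  obtain ⟨v₀, hv₀, hv₀e⟩ := hp₀
  obtain ⟨v₁, hv₁, hv₁e⟩ := hp₁S
  obtain ⟨v₂, hv₂, hv₂e⟩ := hp₂S
  set K₀ : ℤ := u 0 * v₀ 1 - u 1 * v₀ 0 with hK₀
  set K₁ : ℤ := u 0 * v₁ 1 - u 1 * v₁ 0 with hK₁
  set K₂ : ℤ := u 0 * v₂ 1 - u 1 * v₂ 0 with hK₂
  have hf₀ : fphi u p₀ = (K₀ : ℝ) := by rw [← hv₀e, fphi_toE]
  have hf₁ : fphi u p₁ = (K₁ : ℝ) := by rw [← hv₁e, fphi_toE]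
  have hf₂ : fphi u p₂ = (K₂ : ℝ) := by rw [← hv₂e, fphi_toE]
  have hp₀P : p₀ ∈ P := hSP ⟨v₀, hv₀, hv₀e⟩
  have hp₁P : p₁ ∈ P := hSP ⟨v₁, hv₁, hv₁e⟩
  have hp₂P : p₂ ∈ P := hSP ⟨v₂, hv₂, hv₂e⟩
  have hPc : Convex ℝ P := by rw [hP]; exact convex_convexHull ℝ _
  -- distinctness facts
  have hne01 : p₀ ≠ p₁ := fun h => hw₁0 (by rw [hw₁, h, sub_self])
  have hne02 : p₀ ≠ p₂ := by
    intro h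
    apply hw₂
    rw [hw₂e, ← h, sub_self]
    exact Submodule.zero_mem _
  have hne12 : p₁ ≠ p₂ := by
    intro h
    apply hw₂
    rw [hw₂e, ← h, ← hw₁]
    exact Submodule.mem_span_singleton_self w₁
  -- non-collinearity in all needed forms
  have nc01 : ∀ t : ℝ, p₂ ≠ p₀ + t • (p₁ - p₀) := by
    intro t hc
    apply hw₂
    rw [hw₂e, hc, hw₁]
    rw [Submodule.mem_span_singleton]
    exact ⟨t, by module⟩
  have nc02 : ∀ t : ℝ, p₁ ≠ p₀ + t • (p₂ - p₀) := by
    intro t hc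
    have ht0 : t ≠ 0 := by
      intro h
      rw [h, zero_smul, add_zero] at hc
      exact hne01 hc.symm
    apply hw₂
    rw [Submodule.mem_span_singleton]
    have key : t • w₂ = w₁ := by rw [hw₂e, hw₁, hc]; module
    exact ⟨t⁻¹, by rw [← key, inv_smul_smul₀ ht0]⟩
  have nc12 : ∀ t : ℝ, p₀ ≠ p₁ + t • (p₂ - p₁) := by
    intro t hc
    have ht0 : t ≠ 0 := by
      intro h
      rw [h, zero_smul, add_zero] at hc
      exact hne01 hc
    apply hw₂
    rw [Submodule.mem_span_singleton]
    have key : t • w₂ = (t - 1) • w₁ := by rw [hw₂e, hw₁, hc]; module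
    exact ⟨t⁻¹ * (t - 1), by rw [mul_smul, ← key, inv_smul_smul₀ ht0]⟩
  -- case analysis on the integer heights
  by_cases e01 : K₀ = K₁
  · exact ⟨K₀, p₀, p₁, hp₀P, hp₁P, hf₀, by rw [hf₁, e01], hne01⟩
  by_cases e02 : K₀ = K₂
  · exact ⟨K₀, p₀, p₂, hp₀P, hp₂P, hf₀, by rw [hf₂, e02], hne02⟩
  by_cases e12 : K₁ = K₂
  · exact ⟨K₁, p₁, p₂, hp₁P, hp₂P, hf₁, by rw [hf₂, e12], hne12⟩
  -- all heights distinct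
  rcases lt_trichotomy K₀ K₁ with h01 | h01 | h01
  · rcases lt_trichotomy K₁ K₂ with h12 | h12 | h12
    · -- K₀ < K₁ < K₂, median p₁
      obtain ⟨p, q, hp, hq, hfp, hfq, hpq⟩ := mid_helper hPc (fphi u) hp₀P hp₂P hp₁P
        (by rw [hf₀, hf₁]; exact_mod_cast h01) (by rw [hf₁, hf₂]; exact_mod_cast h12) nc02
      exact ⟨K₁, p, q, hp, hq, by rw [hfp, hf₁], by rw [hfq, hf₁], hpq⟩
    · exact absurd h12 e12
    · rcases lt_trichotomy K₀ K₂ with h02 | h02 | h02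
      · -- K₀ < K₂ < K₁, median p₂
        obtain ⟨p, q, hp, hq, hfp, hfq, hpq⟩ := mid_helper hPc (fphi u) hp₀P hp₁P hp₂P
          (by rw [hf₀, hf₂]; exact_mod_cast h02) (by rw [hf₂, hf₁]; exact_mod_cast h12) nc01
        exact ⟨K₂, p, q, hp, hq, by rw [hfp, hf₂], by rw [hfq, hf₂], hpq⟩
      · exact absurd h02 e02
      · -- K₂ < K₀ < K₁, median p₀
        obtain ⟨p, q, hp, hq, hfp, hfq, hpq⟩ := mid_helper hPc (fphi u) hp₂P hp₁P hp₀P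
          (by rw [hf₂, hf₀]; exact_mod_cast h02) (by rw [hf₀, hf₁]; exact_mod_cast h01)
          (noncol_swap nc12)
        exact ⟨K₀, p, q, hp, hq, by rw [hfp, hf₀], by rw [hfq, hf₀], hpq⟩
  · exact absurd h01 e01
  · rcases lt_trichotomy K₂ K₁ with h12 | h12 | h12
    · -- K₂ < K₁ < K₀, median p₁
      obtain ⟨p, q, hp, hq, hfp, hfq, hpq⟩ := mid_helper hPc (fphi u) hp₂P hp₀P hp₁P
        (by rw [hf₂, hf₁]; exact_mod_cast h12) (by rw [hf₁, hf₀]; exact_mod_cast h01)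
        (noncol_swap nc02)
      exact ⟨K₁, p, q, hp, hq, by rw [hfp, hf₁], by rw [hfq, hf₁], hpq⟩
    · exact absurd h12.symm e12
    · rcases lt_trichotomy K₀ K₂ with h02 | h02 | h02
      · -- K₁ < K₀ < K₂, median p₀
        obtain ⟨p, q, hp, hq, hfp, hfq, hpq⟩ := mid_helper hPc (fphi u) hp₁P hp₂P hp₀P
          (by rw [hf₁, hf₀]; exact_mod_cast h01) (by rw [hf₀, hf₂]; exact_mod_cast h02) nc12
        exact ⟨K₀, p, q, hp, hq, by rw [hfp, hf₀], by rw [hfq, hf₀], hpq⟩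
      · exact absurd h02 e02
      · -- K₁ < K₂ < K₀, median p₂
        obtain ⟨p, q, hp, hq, hfp, hfq, hpq⟩ := mid_helper hPc (fphi u) hp₁P hp₀P hp₂P
          (by rw [hf₁, hf₂]; exact_mod_cast h12) (by rw [hf₂, hf₀]; exact_mod_cast h02)
          (noncol_swap nc01)
        exact ⟨K₂, p, q, hp, hq, by rw [hfp, hf₂], by rw [hfq, hf₂], hpq⟩

/-- The exposed face of `P` maximizing `⟨a, ·⟩`. -/
def maxFace (P : Set (EuclideanSpace ℝ (Fin 2))) (a : EuclideanSpace ℝ (Fin 2)) :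
    Set (EuclideanSpace ℝ (Fin 2)) :=
  {x ∈ P | ∀ y ∈ P, (inner ℝ a y : ℝ) ≤ inner ℝ a x}

/-- The exposed face of `P` minimizing `⟨a, ·⟩`. -/
def minFace (P : Set (EuclideanSpace ℝ (Fin 2))) (a : EuclideanSpace ℝ (Fin 2)) :
    Set (EuclideanSpace ℝ (Fin 2)) :=
  {x ∈ P | ∀ y ∈ P, (inner ℝ a x : ℝ) ≤ inner ℝ a y}

theorem main_core (V : Finset (Fin 2 → ℤ)) (P : Set (EuclideanSpace ℝ (Fin 2)))
    (hP : P = convexHull ℝ (toE '' (V : Set (Fin 2 → ℤ))))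
    (hdim : affineSpan ℝ P = ⊤)
    (u : Fin 2 → ℤ) (hu : Finset.univ.gcd u = 1)
    (z₁ z₂ : Fin 2 → ℤ)
    (hlt : u 0 * z₁ 1 - u 1 * z₁ 0 < u 0 * z₂ 1 - u 1 * z₂ 0)
    (hm₁ : ∀ z' : Fin 2 → ℤ, Metric.diam (uline z' u ∩ P) ≤ Metric.diam (uline z₁ u ∩ P))
    (hm₂ : ∀ z' : Fin 2 → ℤ, Metric.diam (uline z' u ∩ P) ≤ Metric.diam (uline z₂ u ∩ P)) :
    ∃ a : EuclideanSpace ℝ (Fin 2), a ≠ 0 ∧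
      Module.finrank ℝ ↥(vectorSpan ℝ (maxFace P a)) = 1 ∧
      Module.finrank ℝ ↥(vectorSpan ℝ (minFace P a)) = 1 ∧
      ∀ z : Fin 2 → ℤ,
        (∀ z' : Fin 2 → ℤ, Metric.diam (uline z' u ∩ P) ≤ Metric.diam (uline z u ∩ P)) →
        uline z u ∩ P ⊆ convexHull ℝ (maxFace P a ∪ minFace P a) := by
  classical
  have hu0 : u ≠ 0 := gcd_ne_zero hu
  set v0 : EuclideanSpace ℝ (Fin 2) := toE u with hv0def
  have hv0 : v0 ≠ 0 := toE_ne_zero hu0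
  have hnorm : (0:ℝ) < ‖v0‖ := norm_pos_iff.mpr hv0
  have hPc : Convex ℝ P := by rw [hP]; exact convex_convexHull ℝ _
  have hPcomp : IsCompact P := by
    rw [hP]; exact Set.Finite.isCompact_convexHull ℝ (V.finite_toSet.image toE)
  set N₁ : ℤ := u 0 * z₁ 1 - u 1 * z₁ 0 with hN₁
  set N₂ : ℤ := u 0 * z₂ 1 - u 1 * z₂ 0 with hN₂
  have hfz₁ : fphi u (toE z₁) = (N₁ : ℝ) := fphi_toE u z₁
  have hfz₂ : fphi u (toE z₂) = (N₂ : ℝ) := fphi_toE u z₂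
  set D : ℝ := Metric.diam (uline z₁ u ∩ P) with hD
  have hD2 : Metric.diam (uline z₂ u ∩ P) = D := le_antisymm (hm₁ z₂) (hm₂ z₁)
  -- lattice chords are short
  have hmaxD : ∀ (m : ℤ) (p q : EuclideanSpace ℝ (Fin 2)), p ∈ P → q ∈ P →
      fphi u p = (m : ℝ) → fphi u q = (m : ℝ) → dist p q ≤ D := by
    intro m p q hp hq hfp hfq
    obtain ⟨z', hz'⟩ := exists_height hu m
    have hfz' : fphi u (toE z') = (m : ℝ) := by rw [fphi_toE, hz']
    have hmem : ∀ r, r ∈ P → fphi u r = (m : ℝ) → r ∈ uline z' u ∩ P := by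
      intro r hr hfr
      refine ⟨?_, hr⟩
      rw [uline_eq hu0, Set.mem_setOf_eq, hfz', hfr]
    calc dist p q ≤ Metric.diam (uline z' u ∩ P) :=
          Metric.dist_le_diam_of_mem (chord_compact hu0 hPcomp z').isBounded
            (hmem p hp hfp) (hmem q hq hfq)
      _ ≤ D := hm₁ z'
  -- D is positive
  have hDpos : 0 < D := by
    obtain ⟨m, p, q, hp, hq, hfp, hfq, hpq⟩ := two_points hP hdim u
    calc (0:ℝ) < dist p q := dist_pos.mpr hpq
      _ ≤ D := hmaxD m p q hp hq hfp hfq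
  set w : EuclideanSpace ℝ (Fin 2) := (D / ‖v0‖) • v0 with hw
  have hfw : fphi u w = 0 := by
    rw [hw, map_smul, hv0def, fphi_toE_u, smul_zero]
  -- maximal chords are segments
  obtain ⟨x₁, hchord₁⟩ := chord_seg hu0 hPcomp hPc z₁ hDpos rfl
  obtain ⟨x₂, hchord₂⟩ := chord_seg hu0 hPcomp hPc z₂ hDpos hD2
  have hsetchord : ∀ (z' : Fin 2 → ℤ) (N : ℤ), fphi u (toE z') = (N:ℝ) →
      {x | x ∈ P ∧ fphi u x = (N : ℝ)} = uline z' u ∩ P := by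
    intro z' N hfz'
    rw [uline_eq hu0]
    ext x
    simp only [Set.mem_setOf_eq, Set.mem_inter_iff, hfz']
    tauto
  have hc1 : {x | x ∈ P ∧ fphi u x = (N₁ : ℝ)} = segment ℝ x₁ (x₁ + w) := by
    rw [hsetchord z₁ N₁ hfz₁, hchord₁]
  have hc2 : {x | x ∈ P ∧ fphi u x = (N₂ : ℝ)} = segment ℝ x₂ (x₂ + w) := by
    rw [hsetchord z₂ N₂ hfz₂, hchord₂]
  -- memberships
  have hx₁ : x₁ ∈ P ∧ fphi u x₁ = (N₁ : ℝ) := by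
    rw [← Set.mem_setOf_eq (p := fun x => x ∈ P ∧ fphi u x = (N₁:ℝ)), hc1]
    exact left_mem_segment ℝ _ _
  have hx₁w : x₁ + w ∈ P ∧ fphi u (x₁ + w) = (N₁ : ℝ) := by
    rw [← Set.mem_setOf_eq (p := fun x => x ∈ P ∧ fphi u x = (N₁:ℝ)), hc1]
    exact right_mem_segment ℝ _ _
  have hx₂ : x₂ ∈ P ∧ fphi u x₂ = (N₂ : ℝ) := by
    rw [← Set.mem_setOf_eq (p := fun x => x ∈ P ∧ fphi u x = (N₂:ℝ)), hc2]
    exact left_mem_segment ℝ _ _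
  have hx₂w : x₂ + w ∈ P ∧ fphi u (x₂ + w) = (N₂ : ℝ) := by
    rw [← Set.mem_setOf_eq (p := fun x => x ∈ P ∧ fphi u x = (N₂:ℝ)), hc2]
    exact right_mem_segment ℝ _ _
  -- the normal vector
  set d : EuclideanSpace ℝ (Fin 2) := x₂ - x₁ with hd
  have hfd : fphi u d = (N₂ : ℝ) - N₁ := by rw [hd, map_sub, hx₁.2, hx₂.2]
  have hd0 : d ≠ 0 := by
    intro h
    rw [h, map_zero] at hfd
    have : (N₁ : ℝ) < N₂ := by exact_mod_cast hlt
    linarith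
  set a : EuclideanSpace ℝ (Fin 2) := rot d with ha
  have hav : 0 < (inner ℝ a v0 : ℝ) := by
    rw [ha, inner_rot]
    have : d 1 * v0 0 - d 0 * v0 1 = fphi u d := by
      rw [fphi_apply, hv0def, toE_apply, toE_apply]; ring
    rw [this, hfd]
    have : (N₁ : ℝ) < N₂ := by exact_mod_cast hlt
    linarith
  have ha0 : a ≠ 0 := by
    intro h
    rw [h, inner_zero_left] at hav
    exact lt_irrefl 0 hav
  have haw : 0 < (inner ℝ a w : ℝ) := by
    rw [hw, real_inner_smul_right]
    positivity
  have had : (inner ℝ a d : ℝ) = 0 := by rw [ha, inner_rot]; ring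
  set c : ℝ := inner ℝ a x₁ with hc
  have ha2 : (inner ℝ a x₂ : ℝ) = c := by
    have : (inner ℝ a (x₂ - x₁) : ℝ) = 0 := had
    rw [inner_sub_right] at this
    rw [hc]; linarith
  set c' : ℝ := c + inner ℝ a w with hc'
  have hax₁w : (inner ℝ a (x₁ + w) : ℝ) = c' := by rw [inner_add_right, hc']
  have hax₂w : (inner ℝ a (x₂ + w) : ℝ) = c' := by rw [inner_add_right, ha2, hc']
  have hker : ∀ p q : EuclideanSpace ℝ (Fin 2), fphi u p = fphi u q →
      ∃ t : ℝ, p - q = t • v0 := by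
    intro p q h
    exact ker_fphi hu0 (by rw [map_sub, h, sub_self])
  have hlin : IsLinearMap ℝ (fun y : EuclideanSpace ℝ (Fin 2) => (inner ℝ a y : ℝ)) :=
    ⟨fun x y => inner_add_right a x y, fun r x => real_inner_smul_right a x r⟩
  -- lower support bound on all of P
  have hlow : ∀ y ∈ P, c ≤ (inner ℝ a y : ℝ) := by
    have hsub : toE '' (V : Set (Fin 2 → ℤ)) ⊆ {y | c ≤ (inner ℝ a y : ℝ)} := by
      rintro y ⟨v, hv, rfl⟩
      exact lower_bound hPc (fphi u) v0 hDpos hv0 (by rw [hv0def]; exact fphi_toE_u u)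
        hker a hav N₁ N₂ hlt x₁ x₂ hc1 hc2 rfl ha2 hmaxD (toE v)
        (by rw [hP]; exact subset_convexHull ℝ _ ⟨v, hv, rfl⟩)
        (u 0 * v 1 - u 1 * v 0) (fphi_toE u v)
    have : P ⊆ {y | c ≤ (inner ℝ a y : ℝ)} := by
      rw [hP]
      exact convexHull_min hsub (convex_halfSpace_ge hlin c)
    exact fun y hy => this hy
  -- upper support bound on all of P
  have hupp : ∀ y ∈ P, (inner ℝ a y : ℝ) ≤ c' := by
    have hseg1' : {x | x ∈ P ∧ fphi u x = (N₁ : ℝ)} =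
        segment ℝ (x₁ + w) ((x₁ + w) + (D / ‖-v0‖) • (-v0)) := by
      have he : (x₁ + w) + (D / ‖-v0‖) • (-v0) = x₁ := by
        rw [norm_neg, smul_neg, ← hw]; abel
      rw [he, segment_symm]; exact hc1
    have hseg2' : {x | x ∈ P ∧ fphi u x = (N₂ : ℝ)} =
        segment ℝ (x₂ + w) ((x₂ + w) + (D / ‖-v0‖) • (-v0)) := by
      have he : (x₂ + w) + (D / ‖-v0‖) • (-v0) = x₂ := by
        rw [norm_neg, smul_neg, ← hw]; abel
      rw [he, segment_symm]; exact hc2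
    have hker' : ∀ p q : EuclideanSpace ℝ (Fin 2), fphi u p = fphi u q →
        ∃ t : ℝ, p - q = t • (-v0) := by
      intro p q h
      obtain ⟨t, ht⟩ := hker p q h
      exact ⟨-t, by rw [neg_smul_neg, ht]⟩
    have hav' : 0 < (inner ℝ (-a) (-v0) : ℝ) := by rw [inner_neg_neg]; exact hav
    have hsub : toE '' (V : Set (Fin 2 → ℤ)) ⊆ {y | (inner ℝ a y : ℝ) ≤ c'} := by
      rintro y ⟨v, hv, rfl⟩
      have := lower_bound hPc (fphi u) (-v0) hDpos (neg_ne_zero.mpr hv0)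
        (by rw [map_neg, hv0def, fphi_toE_u, neg_zero]) hker' (-a) hav' N₁ N₂ hlt
        (x₁ + w) (x₂ + w) hseg1' hseg2'
        (by rw [inner_neg_left, hax₁w])
        (by rw [inner_neg_left, hax₂w]) hmaxD (toE v)
        (by rw [hP]; exact subset_convexHull ℝ _ ⟨v, hv, rfl⟩)
        (u 0 * v 1 - u 1 * v 0) (fphi_toE u v)
      rw [inner_neg_left] at this
      simp only [Set.mem_setOf_eq]
      linarith
    have : P ⊆ {y | (inner ℝ a y : ℝ) ≤ c'} := by
      rw [hP]
      exact convexHull_min hsub (convex_halfSpace_le hlin c')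
    exact fun y hy => this hy
  -- face memberships
  have hminmem : ∀ x, x ∈ P → (inner ℝ a x : ℝ) = c → x ∈ minFace P a := by
    intro x hxP hxc
    exact ⟨hxP, fun y hy => by rw [hxc]; exact hlow y hy⟩
  have hmaxmem : ∀ x, x ∈ P → (inner ℝ a x : ℝ) = c' → x ∈ maxFace P a := by
    intro x hxP hxc
    exact ⟨hxP, fun y hy => by rw [hxc]; exact hupp y hy⟩
  have hminval : ∀ x ∈ minFace P a, (inner ℝ a x : ℝ) = c := by
    rintro x ⟨hxP, hxmin⟩
    exact le_antisymm (hxmin x₁ hx₁.1) (hlow x hxP)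
  have hmaxval : ∀ x ∈ maxFace P a, (inner ℝ a x : ℝ) = c' := by
    rintro x ⟨hxP, hxmax⟩
    refine le_antisymm (hupp x hxP) ?_
    rw [← hax₁w]
    exact hxmax (x₁ + w) hx₁w.1
  -- vector spans
  have hspan_eq : ∀ (F : Set (EuclideanSpace ℝ (Fin 2))) (k : ℝ),
      (∀ x ∈ F, (inner ℝ a x : ℝ) = k) → vectorSpan ℝ F ≤ Submodule.span ℝ {d} := by
    intro F k hF
    rw [vectorSpan_def, Submodule.span_le]
    rintro v ⟨p, hp, q, hq, rfl⟩
    have h0 : (inner ℝ a (p - q) : ℝ) = 0 := by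
      rw [inner_sub_right, hF p hp, hF q hq, sub_self]
    rw [ha, inner_rot] at h0
    obtain ⟨t, ht⟩ := ker_rot hd0 (by
      show d 1 * (p - q) 0 - d 0 * (p - q) 1 = 0
      linarith [h0])
    rw [SetLike.mem_coe, Submodule.mem_span_singleton]
    exact ⟨t, by rw [← ht]; rfl⟩
  have hmax_rank : Module.finrank ℝ ↥(vectorSpan ℝ (maxFace P a)) = 1 := by
    have hle := hspan_eq (maxFace P a) c' hmaxval
    have hge : Submodule.span ℝ {d} ≤ vectorSpan ℝ (maxFace P a) := by
      rw [Submodule.span_singleton_le_iff_mem]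
      have h1 : x₁ + w ∈ maxFace P a := hmaxmem _ hx₁w.1 hax₁w
      have h2 : x₂ + w ∈ maxFace P a := hmaxmem _ hx₂w.1 hax₂w
      have := vsub_mem_vectorSpan ℝ h2 h1
      have he : (x₂ + w) -ᵥ (x₁ + w) = d := by
        show (x₂ + w) - (x₁ + w) = d
        rw [hd]; abel
      rwa [he] at this
    rw [le_antisymm hle hge]
    exact finrank_span_singleton hd0
  have hmin_rank : Module.finrank ℝ ↥(vectorSpan ℝ (minFace P a)) = 1 := by
    have hle := hspan_eq (minFace P a) c hminval
    have hge : Submodule.span ℝ {d} ≤ vectorSpan ℝ (minFace P a) := by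
      rw [Submodule.span_singleton_le_iff_mem]
      have h1 : x₁ ∈ minFace P a := hminmem _ hx₁.1 rfl
      have h2 : x₂ ∈ minFace P a := hminmem _ hx₂.1 ha2
      have := vsub_mem_vectorSpan ℝ h2 h1
      have he : x₂ -ᵥ x₁ = d := rfl
      rwa [he] at this
    rw [le_antisymm hle hge]
    exact finrank_span_singleton hd0
  refine ⟨a, ha0, hmax_rank, hmin_rank, ?_⟩
  -- the final containment
  intro z hmz
  have hDz : Metric.diam (uline z u ∩ P) = D := le_antisymm (hm₁ z) (hmz z₁)
  obtain ⟨x₃, hchord₃⟩ := chord_seg hu0 hPcomp hPc z hDpos hDz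
  rw [hchord₃]
  have hx₃ : x₃ ∈ uline z u ∩ P := by rw [hchord₃]; exact left_mem_segment ℝ _ _
  have hx₃w : x₃ + w ∈ uline z u ∩ P := by rw [hchord₃]; exact right_mem_segment ℝ _ _
  have hax₃ : (inner ℝ a x₃ : ℝ) = c := by
    have h1 : c ≤ (inner ℝ a x₃ : ℝ) := hlow x₃ hx₃.2
    have h2 : (inner ℝ a (x₃ + w) : ℝ) ≤ c' := hupp _ hx₃w.2
    rw [inner_add_right] at h2
    rw [hc'] at h2
    linarith
  have hmem1 : x₃ ∈ minFace P a := hminmem _ hx₃.2 hax₃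
  have hmem2 : x₃ + w ∈ maxFace P a := by
    apply hmaxmem _ hx₃w.2
    rw [inner_add_right, hax₃, hc']
  exact (convex_convexHull ℝ _).segment_subset
    (subset_convexHull ℝ _ (Or.inr hmem1))
    (subset_convexHull ℝ _ (Or.inl hmem2))


/-- If two distinct `u`-lattice lines both maximize the Euclidean
chord length with a lattice polygon `P` among `u`-lattice lines, then `P` has a pair
of parallel edges `F⁺, F⁻` (argmax and argmin faces of a common linear functional,
each of affine dimension 1) such that every chord-length-maximizing `u`-lattice line
meets `P` inside `conv(F⁺ ∪ F⁻)`. -/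
theorem stmt6 (V : Finset (Fin 2 → ℤ)) (P : Set (EuclideanSpace ℝ (Fin 2)))
    (hP : P = convexHull ℝ (toE '' (V : Set (Fin 2 → ℤ))))
    (hdim : affineSpan ℝ P = ⊤)
    (u : Fin 2 → ℤ) (hu : Finset.univ.gcd u = 1)
    (z₁ z₂ : Fin 2 → ℤ) (hne : uline z₁ u ≠ uline z₂ u)
    (hm₁ : ∀ z' : Fin 2 → ℤ, Metric.diam (uline z' u ∩ P) ≤ Metric.diam (uline z₁ u ∩ P))
    (hm₂ : ∀ z' : Fin 2 → ℤ, Metric.diam (uline z' u ∩ P) ≤ Metric.diam (uline z₂ u ∩ P)) :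
    ∃ a : EuclideanSpace ℝ (Fin 2), a ≠ 0 ∧
      Module.finrank ℝ ↥(vectorSpan ℝ (maxFace P a)) = 1 ∧
      Module.finrank ℝ ↥(vectorSpan ℝ (minFace P a)) = 1 ∧
      ∀ z : Fin 2 → ℤ,
        (∀ z' : Fin 2 → ℤ, Metric.diam (uline z' u ∩ P) ≤ Metric.diam (uline z u ∩ P)) →
        uline z u ∩ P ⊆ convexHull ℝ (maxFace P a ∪ minFace P a) := by

  have hu0 : u ≠ 0 := gcd_ne_zero hu
  rcases lt_trichotomy (u 0 * z₁ 1 - u 1 * z₁ 0) (u 0 * z₂ 1 - u 1 * z₂ 0) with h | h | h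
  · exact main_core V P hP hdim u hu z₁ z₂ h hm₁ hm₂
  · exfalso
    apply hne
    rw [uline_eq hu0 z₁, uline_eq hu0 z₂, fphi_toE, fphi_toE, h]
  · exact main_core V P hP hdim u hu z₂ z₁ h hm₂ hm₁
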